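/- Let R ⊆ S be a standard unramified extension of finite valuation rings with trace map Tr : S → R. If t ∈ S satisfies Tr(ts) = 0 for all s ∈ S, then t = 0. -/

import Mathlib

attribute [local instance] Ideal.Quotient.field

theorem trace_nondegenerate_of_standard_extension
    (R : Type*) [CommRing R] [Fintype R] [IsLocalRing R] [IsPrincipalIdealRing R]
    (π : R) (hπ : IsLocalRing.maximalIdeal R = Ideal.span {π})
    (f : Polynomial R) (hf : f.Monic)
    (hirr : Irreducible
      (f.map (Ideal.Quotient.mk (IsLocalRing.maximalIdeal R))))
    (t : AdjoinRoot f)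
    (ht : ∀ s : AdjoinRoot f, Algebra.trace R (AdjoinRoot f) (t * s) = 0) :
    t = 0 := by
  classical
  set p := IsLocalRing.maximalIdeal R with hp
  let pb : PowerBasis R (AdjoinRoot f) := AdjoinRoot.powerBasis' hf
  let b : Module.Basis (Fin pb.dim) R (AdjoinRoot f) := pb.basis
  haveI : Module.Free R (AdjoinRoot f) := Module.Free.of_basis b
  haveI : Module.Finite R (AdjoinRoot f) := Module.Finite.of_basis b
  set pS := p.map (algebraMap R (AdjoinRoot f)) with hpS
  haveI : Fact (Irreducible (f.map (Ideal.Quotient.mk p))) := ⟨hirr⟩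
  have hof : AdjoinRoot.of f = algebraMap R (AdjoinRoot f) := rfl
  have hfield : IsField (AdjoinRoot f ⧸ pS) := by
    have e : (AdjoinRoot f ⧸ pS) ≃+* AdjoinRoot (f.map (Ideal.Quotient.mk p)) := by
      rw [hpS, ← hof]
      exact (AdjoinRoot.quotEquivQuotMap f p).toRingEquiv
    exact e.toMulEquiv.isField (Field.toIsField _)
  letI : Field (AdjoinRoot f ⧸ pS) := hfield.toField
  let bq : Module.Basis (Fin pb.dim) (R ⧸ p) (AdjoinRoot f ⧸ pS) := IsLocalRing.basisQuotient b
  haveI : Module.Finite (R ⧸ p) (AdjoinRoot f ⧸ pS) := Module.Finite.of_basis bq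
  let M : Matrix (Fin pb.dim) (Fin pb.dim) R := Algebra.traceMatrix R b
  have hMmap : M.map (Ideal.Quotient.mk p) = Algebra.traceMatrix (R ⧸ p) bq := by
    ext i j
    simp only [M, Matrix.map_apply, Algebra.traceMatrix_apply, Algebra.traceForm_apply]
    rw [← Algebra.trace_quotient_mk, map_mul, IsLocalRing.basisQuotient_apply,
      IsLocalRing.basisQuotient_apply]
  have hdetq : (Algebra.traceMatrix (R ⧸ p) bq).det ≠ 0 := by
    have hnd := traceForm_nondegenerate (R ⧸ p) (AdjoinRoot f ⧸ pS)
    have h1 := hnd.toMatrix bq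
    rw [← Algebra.traceMatrix_of_basis] at h1
    exact Matrix.nondegenerate_iff_det_ne_zero.mp h1
  have hdet : IsUnit M.det := by
    rw [← IsLocalRing.notMem_maximalIdeal, ← hp]
    intro hmem
    apply hdetq
    have h0 : (Ideal.Quotient.mk p) M.det = 0 := (Ideal.Quotient.eq_zero_iff_mem).mpr hmem
    rw [RingHom.map_det, RingHom.mapMatrix_apply, hMmap] at h0
    exact h0
  haveI := M.invertibleOfIsUnitDet hdet
  have hvec : Matrix.mulVec M (b.equivFun t) = 0 := by
    rw [Algebra.traceMatrix_of_basis_mulVec]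
    funext i
    simpa using ht (b i)
  have hc : b.equivFun t = 0 := by
    have h2 := congrArg (fun v => Matrix.mulVec (⅟M) v) hvec
    simpa [Matrix.mulVec_mulVec] using h2
  simpa using b.equivFun.map_eq_zero_iff.mp hc
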